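/- Let 𝓕 be a self-dual complex antisymmetric 4×4 matrix and ξ ∈ ℝ⁴, and set σ_β := 2 ξ^α 𝓕_{αβ}. Then for all indices α, β, ρ: ε_{αβμν} ξ^μ η^{ρσ} η^{ντ} 𝓕_{στ} = −i ξ^ρ 𝓕_{αβ} + (i/2)( δ^ρ_α σ_β − δ^ρ_β σ_α ), where δ^ρ_α is the Kronecker delta, ξ^μ are the components of ξ, and repeated indices are summed. -/

import Mathlib

open Matrix Complex Finset

/-- The Minkowski metric `η = diag(−1,1,1,1)` (equal to its own inverse),
with entries regarded as complex numbers. -/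
def eta : Fin 4 → Fin 4 → ℂ := fun i j => if i = j then (if i = 0 then -1 else 1) else 0

/-- The Levi-Civita symbol `ε_{abcd}` on `{0,1,2,3}`: the sign of the permutation
`(a,b,c,d)` of `(0,1,2,3)`, and `0` if any index repeats. -/
def eps (a b c d : Fin 4) : ℂ :=
  Matrix.det (Matrix.of fun i j => if ![a, b, c, d] i = j then (1 : ℂ) else 0)

/-- A complex antisymmetric `4 × 4` matrix `X` is self-dual if its Hodge dual
`X*_{ab} = ½ ε_{abcd} η^{cm} η^{dn} X_{mn}` satisfies `X* = −iX`. -/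
def SelfDual (X : Matrix (Fin 4) (Fin 4) ℂ) : Prop :=
  ∀ a b, (1 / 2 : ℂ) * ∑ c, ∑ d, ∑ m, ∑ n, eps a b c d * eta c m * eta d n * X m n
    = -Complex.I * X a b

/-- **Identity (xiF):** for a self-dual `𝓕` and `ξ ∈ ℝ⁴`, with `σ_β = 2 ξ^α 𝓕_{αβ}`,
`ε_{αβμν} ξ^μ η^{ρσ} η^{ντ} 𝓕_{στ} = −i ξ^ρ 𝓕_{αβ} + (i/2)(δ^ρ_α σ_β − δ^ρ_β σ_α)`. -/

def epsZ (a b c d : Fin 4) : ℤ :=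
  Matrix.det (Matrix.of fun i j => if ![a, b, c, d] i = j then (1 : ℤ) else 0)

lemma eps_eq (a b c d : Fin 4) : eps a b c d = ((epsZ a b c d : ℤ) : ℂ) := by
  have h := RingHom.map_det (Int.castRingHom ℂ)
    (Matrix.of fun i j => if ![a, b, c, d] i = j then (1 : ℤ) else 0)
  unfold eps epsZ
  rw [show (((Matrix.of fun i j => if ![a, b, c, d] i = j then (1 : ℤ) else 0).det : ℤ) : ℂ)
      = Int.castRingHom ℂ (Matrix.of fun i j => if ![a, b, c, d] i = j then (1 : ℤ) else 0).det
      from rfl, h]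
  congr 1; ext i j; simp [RingHom.mapMatrix_apply, apply_ite]

@[simp] lemma eps0123 : eps 0 1 2 3 = 1 := by rw [eps_eq, show epsZ 0 1 2 3 = 1 from by decide]; norm_num
@[simp] lemma eps0132 : eps 0 1 3 2 = -1 := by rw [eps_eq, show epsZ 0 1 3 2 = -1 from by decide]; norm_num
@[simp] lemma eps0213 : eps 0 2 1 3 = -1 := by rw [eps_eq, show epsZ 0 2 1 3 = -1 from by decide]; norm_num
@[simp] lemma eps0231 : eps 0 2 3 1 = 1 := by rw [eps_eq, show epsZ 0 2 3 1 = 1 from by decide]; norm_num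
@[simp] lemma eps0312 : eps 0 3 1 2 = 1 := by rw [eps_eq, show epsZ 0 3 1 2 = 1 from by decide]; norm_num
@[simp] lemma eps0321 : eps 0 3 2 1 = -1 := by rw [eps_eq, show epsZ 0 3 2 1 = -1 from by decide]; norm_num
@[simp] lemma eps1023 : eps 1 0 2 3 = -1 := by rw [eps_eq, show epsZ 1 0 2 3 = -1 from by decide]; norm_num
@[simp] lemma eps1032 : eps 1 0 3 2 = 1 := by rw [eps_eq, show epsZ 1 0 3 2 = 1 from by decide]; norm_num
@[simp] lemma eps1203 : eps 1 2 0 3 = 1 := by rw [eps_eq, show epsZ 1 2 0 3 = 1 from by decide]; norm_num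
@[simp] lemma eps1230 : eps 1 2 3 0 = -1 := by rw [eps_eq, show epsZ 1 2 3 0 = -1 from by decide]; norm_num
@[simp] lemma eps1302 : eps 1 3 0 2 = -1 := by rw [eps_eq, show epsZ 1 3 0 2 = -1 from by decide]; norm_num
@[simp] lemma eps1320 : eps 1 3 2 0 = 1 := by rw [eps_eq, show epsZ 1 3 2 0 = 1 from by decide]; norm_num
@[simp] lemma eps2013 : eps 2 0 1 3 = 1 := by rw [eps_eq, show epsZ 2 0 1 3 = 1 from by decide]; norm_num
@[simp] lemma eps2031 : eps 2 0 3 1 = -1 := by rw [eps_eq, show epsZ 2 0 3 1 = -1 from by decide]; norm_num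
@[simp] lemma eps2103 : eps 2 1 0 3 = -1 := by rw [eps_eq, show epsZ 2 1 0 3 = -1 from by decide]; norm_num
@[simp] lemma eps2130 : eps 2 1 3 0 = 1 := by rw [eps_eq, show epsZ 2 1 3 0 = 1 from by decide]; norm_num
@[simp] lemma eps2301 : eps 2 3 0 1 = 1 := by rw [eps_eq, show epsZ 2 3 0 1 = 1 from by decide]; norm_num
@[simp] lemma eps2310 : eps 2 3 1 0 = -1 := by rw [eps_eq, show epsZ 2 3 1 0 = -1 from by decide]; norm_num
@[simp] lemma eps3012 : eps 3 0 1 2 = -1 := by rw [eps_eq, show epsZ 3 0 1 2 = -1 from by decide]; norm_num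
@[simp] lemma eps3021 : eps 3 0 2 1 = 1 := by rw [eps_eq, show epsZ 3 0 2 1 = 1 from by decide]; norm_num
@[simp] lemma eps3102 : eps 3 1 0 2 = 1 := by rw [eps_eq, show epsZ 3 1 0 2 = 1 from by decide]; norm_num
@[simp] lemma eps3120 : eps 3 1 2 0 = -1 := by rw [eps_eq, show epsZ 3 1 2 0 = -1 from by decide]; norm_num
@[simp] lemma eps3201 : eps 3 2 0 1 = -1 := by rw [eps_eq, show epsZ 3 2 0 1 = -1 from by decide]; norm_num
@[simp] lemma eps3210 : eps 3 2 1 0 = 1 := by rw [eps_eq, show epsZ 3 2 1 0 = 1 from by decide]; norm_num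

@[simp] lemma eps_r01 (a c d : Fin 4) : eps a a c d = 0 :=
  Matrix.det_zero_of_row_eq (show (0:Fin 4) ≠ 1 by decide) rfl
@[simp] lemma eps_r02 (a c d : Fin 4) : eps a c a d = 0 :=
  Matrix.det_zero_of_row_eq (show (0:Fin 4) ≠ 2 by decide) rfl
@[simp] lemma eps_r03 (a c d : Fin 4) : eps a c d a = 0 :=
  Matrix.det_zero_of_row_eq (show (0:Fin 4) ≠ 3 by decide) rfl
@[simp] lemma eps_r12 (a c d : Fin 4) : eps c a a d = 0 :=
  Matrix.det_zero_of_row_eq (show (1:Fin 4) ≠ 2 by decide) rfl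
@[simp] lemma eps_r13 (a c d : Fin 4) : eps c a d a = 0 :=
  Matrix.det_zero_of_row_eq (show (1:Fin 4) ≠ 3 by decide) rfl
@[simp] lemma eps_r23 (a c d : Fin 4) : eps c d a a = 0 :=
  Matrix.det_zero_of_row_eq (show (2:Fin 4) ≠ 3 by decide) rfl

@[simp] lemma eta00 : _root_.eta 0 0 = -1 := by rfl
@[simp] lemma eta01 : _root_.eta 0 1 = 0 := by rfl
@[simp] lemma eta02 : _root_.eta 0 2 = 0 := by rfl
@[simp] lemma eta03 : _root_.eta 0 3 = 0 := by rfl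
@[simp] lemma eta10 : _root_.eta 1 0 = 0 := by rfl
@[simp] lemma eta11 : _root_.eta 1 1 = 1 := by rfl
@[simp] lemma eta12 : _root_.eta 1 2 = 0 := by rfl
@[simp] lemma eta13 : _root_.eta 1 3 = 0 := by rfl
@[simp] lemma eta20 : _root_.eta 2 0 = 0 := by rfl
@[simp] lemma eta21 : _root_.eta 2 1 = 0 := by rfl
@[simp] lemma eta22 : _root_.eta 2 2 = 1 := by rfl
@[simp] lemma eta23 : _root_.eta 2 3 = 0 := by rfl
@[simp] lemma eta30 : _root_.eta 3 0 = 0 := by rfl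
@[simp] lemma eta31 : _root_.eta 3 1 = 0 := by rfl
@[simp] lemma eta32 : _root_.eta 3 2 = 0 := by rfl
@[simp] lemma eta33 : _root_.eta 3 3 = 1 := by rfl

@[simp] lemma fin_v0 : ((0 : Fin 4) : ℕ) = 0 := rfl
@[simp] lemma fin_v1 : ((1 : Fin 4) : ℕ) = 1 := rfl
@[simp] lemma fin_v2 : ((2 : Fin 4) : ℕ) = 2 := rfl
@[simp] lemma fin_v3 : ((3 : Fin 4) : ℕ) = 3 := rfl

open Fin.NatCast in
@[simp] lemma fin_c0 : ((0:ℕ) : Fin 4) = 0 := rfl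
open Fin.NatCast in
@[simp] lemma fin_c1 : ((1:ℕ) : Fin 4) = 1 := rfl
open Fin.NatCast in
@[simp] lemma fin_c2 : ((2:ℕ) : Fin 4) = 2 := rfl
open Fin.NatCast in
@[simp] lemma fin_c3 : ((3:ℕ) : Fin 4) = 3 := rfl

@[simp] lemma fin_mk0 (h : 0 < 4) : (⟨0, h⟩ : Fin 4) = 0 := rfl
@[simp] lemma fin_mk1 (h : 1 < 4) : (⟨1, h⟩ : Fin 4) = 1 := rfl
@[simp] lemma fin_mk2 (h : 2 < 4) : (⟨2, h⟩ : Fin 4) = 2 := rfl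
@[simp] lemma fin_mk3 (h : 3 < 4) : (⟨3, h⟩ : Fin 4) = 3 := rfl

set_option maxHeartbeats 2000000 in
theorem eps_xi_selfDual_identity (F : Matrix (Fin 4) (Fin 4) ℂ)
    (hFa : Fᵀ = -F) (hF : SelfDual F) (ξ : Fin 4 → ℝ) :
    ∀ a b r : Fin 4,
      (∑ m, ∑ s, ∑ n, ∑ t, eps a b m n * (ξ m : ℂ) * eta r s * eta n t * F s t)
        = -Complex.I * (ξ r : ℂ) * F a b
          + Complex.I / 2 *
            ((if r = a then 1 else 0) * (2 * ∑ m, (ξ m : ℂ) * F m b)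
              - (if r = b then 1 else 0) * (2 * ∑ m, (ξ m : ℂ) * F m a)) := by
  have hA : ∀ i j, F j i = -F i j := fun i j => congrFun (congrFun hFa i) j
  have h00 : F 0 0 = 0 := by have := hA 0 0; linear_combination this / 2
  have h11 : F 1 1 = 0 := by have := hA 1 1; linear_combination this / 2
  have h22 : F 2 2 = 0 := by have := hA 2 2; linear_combination this / 2
  have h33 : F 3 3 = 0 := by have := hA 3 3; linear_combination this / 2
  have e23 : F 2 3 = -Complex.I * F 0 1 := by
    have h := hF 0 1
    simp only [fin_c0, fin_c1, fin_c2, fin_c3, fin_mk0, fin_mk1, fin_mk2, fin_mk3, Fin.sum_univ_four, eta00, eta01, eta02, eta03, eta10, eta11, eta12, eta13, eta20, eta21, eta22, eta23, eta30, eta31, eta32, eta33, eps0123, eps0132, eps_r01, eps_r02, eps_r03, eps_r12,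
      eps_r13, eps_r23] at h
    norm_num [Fin.ext_iff, fin_v0, fin_v1, fin_v2, fin_v3] at h
    rw [hA 3 2] at h ⊢
    linear_combination h
  have e13 : F 1 3 = Complex.I * F 0 2 := by
    have h := hF 0 2
    simp only [fin_c0, fin_c1, fin_c2, fin_c3, fin_mk0, fin_mk1, fin_mk2, fin_mk3, Fin.sum_univ_four, eta00, eta01, eta02, eta03, eta10, eta11, eta12, eta13, eta20, eta21, eta22, eta23, eta30, eta31, eta32, eta33, eps0213, eps0231, eps_r01, eps_r02, eps_r03, eps_r12,
      eps_r13, eps_r23] at h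
    norm_num [Fin.ext_iff, fin_v0, fin_v1, fin_v2, fin_v3] at h
    rw [hA 3 1] at h ⊢
    linear_combination -h
  have e12 : F 1 2 = -Complex.I * F 0 3 := by
    have h := hF 0 3
    simp only [fin_c0, fin_c1, fin_c2, fin_c3, fin_mk0, fin_mk1, fin_mk2, fin_mk3, Fin.sum_univ_four, eta00, eta01, eta02, eta03, eta10, eta11, eta12, eta13, eta20, eta21, eta22, eta23, eta30, eta31, eta32, eta33, eps0312, eps0321, eps_r01, eps_r02, eps_r03, eps_r12,
      eps_r13, eps_r23] at h
    norm_num [Fin.ext_iff, fin_v0, fin_v1, fin_v2, fin_v3] at h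
    rw [hA 2 1] at h ⊢
    linear_combination h
  have e10 : F 1 0 = -F 0 1 := hA 0 1
  have e20 : F 2 0 = -F 0 2 := hA 0 2
  have e30 : F 3 0 = -F 0 3 := hA 0 3
  have e21 : F 2 1 = Complex.I * F 0 3 := by rw [hA 1 2, e12]; ring
  have e31 : F 3 1 = -Complex.I * F 0 2 := by rw [hA 1 3, e13]; ring
  have e32 : F 3 2 = Complex.I * F 0 1 := by rw [hA 2 3, e23]; ring
  intro a b r
  fin_cases a <;> fin_cases b <;> fin_cases r <;>
    · simp only [fin_c0, fin_c1, fin_c2, fin_c3, fin_mk0, fin_mk1, fin_mk2, fin_mk3, Fin.sum_univ_four, eta00, eta01, eta02, eta03, eta10, eta11, eta12, eta13, eta20, eta21, eta22, eta23, eta30, eta31, eta32, eta33, Fin.isValue, eps0123, eps0132, eps0213, eps0231,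
        eps0312, eps0321, eps1023, eps1032, eps1203, eps1230, eps1302, eps1320, eps2013,
        eps2031, eps2103, eps2130, eps2301, eps2310, eps3012, eps3021, eps3102, eps3120,
        eps3201, eps3210, eps_r01, eps_r02, eps_r03, eps_r12, eps_r13, eps_r23,
        h00, h11, h22, h33, e10, e20, e30, e21, e31, e32, e12, e13, e23]
      norm_num [Fin.ext_iff, fin_v0, fin_v1, fin_v2, fin_v3]
      try simp only [h00, h11, h22, h33, e10, e20, e30, e21, e31, e32, e12, e13, e23]
      try ring
      try exact Or.inr trivial
      try (simp only [Complex.I_sq]; ring)
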